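/- For every non-negative integer n, the lattices generated by A_n and V_n coincide: {A_n k : k ∈ ℤ^{2^n}} = {V_n k : k ∈ ℤ^{2^n}}. Hence A_n generates (a coordinate permutation of) the 2^n-dimensional Chebyshev-Frolov lattice. -/

import Mathlib

/-- σ(n,k) from the paper: σ(0,1)=1 and, with d = 2^n, σ(n+1,k)=σ(n,k) for 1 ≤ k ≤ d,
σ(n+1,k)=2d+1−σ(n,k−d) for d+1 ≤ k ≤ 2d. -/
def sigmaCF : ℕ → ℕ → ℤ
  | 0, _ => 1
  | n + 1, k => if k ≤ 2 ^ n then sigmaCF n k else 2 * 2 ^ n + 1 - sigmaCF n (k - 2 ^ n)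

/-- ξ_{n,k} = 2 cos(π(2σ(n,k) − 1)/2^{n+1}). -/
noncomputable def xiCF (n k : ℕ) : ℝ :=
  2 * Real.cos (Real.pi * (2 * (sigmaCF n k : ℝ) - 1) / 2 ^ (n + 1))

/-- D_n = diag(ξ_{n+1,1}, …, ξ_{n+1,2^n}). -/
noncomputable def DCF (n : ℕ) : Matrix (Fin (2 ^ n)) (Fin (2 ^ n)) ℝ :=
  Matrix.diagonal fun i => xiCF (n + 1) (i.val + 1)

/-- A_0 = (1), A_{n+1} = [[A_n, D_n A_n], [A_n, −D_n A_n]]. -/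
noncomputable def ACF : (n : ℕ) → Matrix (Fin (2 ^ n)) (Fin (2 ^ n)) ℝ
  | 0 => 1
  | n + 1 =>
    Matrix.reindex (finSumFinEquiv.trans (finCongr (by rw [pow_succ, mul_two])))
      (finSumFinEquiv.trans (finCongr (by rw [pow_succ, mul_two])))
      (Matrix.fromBlocks (ACF n) (DCF n * ACF n) (ACF n) (-(DCF n * ACF n)))

/-- V_n: Vandermonde matrix with (i,j)-entry ξ_{n,i}^{j−1}. -/
noncomputable def VCF (n : ℕ) : Matrix (Fin (2 ^ n)) (Fin (2 ^ n)) ℝ :=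
  Matrix.of fun i j => xiCF n (i.val + 1) ^ (j.val)

open Submodule Matrix Set

/-- The index equivalence used in the definition of `ACF`. -/
def eCF (n : ℕ) : Fin (2 ^ n) ⊕ Fin (2 ^ n) ≃ Fin (2 ^ (n + 1)) :=
  finSumFinEquiv.trans (finCongr (by rw [pow_succ, mul_two]))

lemma ACF_succ (n : ℕ) : ACF (n + 1) =
    Matrix.reindex (eCF n) (eCF n)
      (Matrix.fromBlocks (ACF n) (DCF n * ACF n) (ACF n) (-(DCF n * ACF n))) := rfl

lemma eCF_inl (n : ℕ) (i : Fin (2 ^ n)) : (eCF n (Sum.inl i)).val = i.val := by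
  simp [eCF]

lemma eCF_inr (n : ℕ) (i : Fin (2 ^ n)) : (eCF n (Sum.inr i)).val = 2 ^ n + i.val := by
  simp [eCF]; omega

lemma xiCF_sq (n k : ℕ) (hk2 : k ≤ 2 ^ n) :
    xiCF (n + 1) k ^ 2 = xiCF n k + 2 := by
  have hσ : sigmaCF (n + 1) k = sigmaCF n k := by simp [sigmaCF, hk2]
  unfold xiCF
  rw [hσ]
  have h : Real.pi * (2 * ((sigmaCF n k : ℤ) : ℝ) - 1) / 2 ^ (n + 1) =
      2 * (Real.pi * (2 * ((sigmaCF n k : ℤ) : ℝ) - 1) / 2 ^ (n + 1 + 1)) := by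
    rw [pow_succ _ (n + 1)]
    field_simp
  rw [h, mul_pow, Real.cos_sq]
  ring

lemma xiCF_neg (n k : ℕ) (hk : 1 ≤ k) (hk2 : k ≤ 2 ^ n) :
    xiCF (n + 1) (2 ^ n + k) = -xiCF (n + 1) k := by
  have h1 : ¬(2 ^ n + k ≤ 2 ^ n) := by omega
  have hσ2 : sigmaCF (n + 1) k = sigmaCF n k := by simp [sigmaCF, hk2]
  have hσ : sigmaCF (n + 1) (2 ^ n + k) = 2 * 2 ^ n + 1 - sigmaCF n k := by
    simp [sigmaCF, h1]
  unfold xiCF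
  rw [hσ, hσ2]
  have h : Real.pi * (2 * ((2 * 2 ^ n + 1 - sigmaCF n k : ℤ) : ℝ) - 1) / 2 ^ (n + 1 + 1) =
      Real.pi - Real.pi * (2 * ((sigmaCF n k : ℤ) : ℝ) - 1) / 2 ^ (n + 1 + 1) := by
    push_cast
    rw [pow_succ, pow_succ]
    field_simp
    ring
  rw [h, Real.cos_pi_sub]
  ring

/-- The lattice generated by a matrix is the ℤ-span of its columns. -/
lemma range_mulVec_eq (m : ℕ) (M : Matrix (Fin m) (Fin m) ℝ) :
    Set.range (fun k : Fin m → ℤ => M.mulVec (fun j => (k j : ℝ))) =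
      (Submodule.span ℤ (Set.range fun a : Fin m => fun i => M i a) : Set (Fin m → ℝ)) := by
  ext v
  simp only [Set.mem_range, SetLike.mem_coe, mem_span_range_iff_exists_fun]
  constructor
  · rintro ⟨k, rfl⟩
    refine ⟨k, ?_⟩
    funext i
    simp [Matrix.mulVec, dotProduct, Finset.sum_apply, mul_comm]
  · rintro ⟨c, rfl⟩
    refine ⟨c, ?_⟩
    funext i
    simp [Matrix.mulVec, dotProduct, Finset.sum_apply, mul_comm]

lemma pow_shift_mem (d : ℕ) (f : Fin d → ℝ) (t : ℤ) (a : Fin d) :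
    (fun i => (f i + (t : ℝ)) ^ (a : ℕ)) ∈
      Submodule.span ℤ (Set.range fun b : Fin d => fun i => f i ^ (b : ℕ)) := by
  rw [mem_span_range_iff_exists_fun]
  refine ⟨fun b => if (b : ℕ) ≤ (a : ℕ) then
      ((a : ℕ).choose (b : ℕ) * t ^ ((a : ℕ) - (b : ℕ)) : ℤ) else 0, ?_⟩
  funext i
  rw [Finset.sum_apply]
  simp only [Pi.smul_apply]
  rw [Fin.sum_univ_eq_sum_range
    (fun x => (if x ≤ (a : ℕ) then ((a : ℕ).choose x * t ^ ((a : ℕ) - x) : ℤ) else 0) • f i ^ x) d]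
  rw [← Finset.sum_subset (Finset.range_subset_range.mpr a.isLt) ?hz]
  · rw [add_pow]
    refine Finset.sum_congr rfl fun x hx => ?_
    rw [if_pos (by simp only [Finset.mem_range] at hx; omega), zsmul_eq_mul]
    push_cast
    ring
  · intro x hx hnx
    rw [if_neg (by simp only [Finset.mem_range] at hnx; omega)]
    simp

lemma span_pow_shift (d : ℕ) (f : Fin d → ℝ) (t : ℤ) :
    Submodule.span ℤ (Set.range fun a : Fin d => fun i => (f i + (t : ℝ)) ^ (a : ℕ)) =
      Submodule.span ℤ (Set.range fun a : Fin d => fun i => f i ^ (a : ℕ)) := by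
  apply le_antisymm <;> rw [Submodule.span_le] <;> rintro _ ⟨a, rfl⟩
  · exact pow_shift_mem d f t a
  · have h := pow_shift_mem d (fun i => f i + (t : ℝ)) (-t) a
    simpa using h

/-- The "doubling" linear map. -/
def phiCF (n : ℕ) (c₁ c₂ : Fin (2 ^ n) → ℝ) :
    (Fin (2 ^ n) → ℝ) →ₗ[ℤ] (Fin (2 ^ (n + 1)) → ℝ) where
  toFun u r := Sum.elim (fun i => c₁ i * u i) (fun i => c₂ i * u i) ((eCF n).symm r)
  map_add' u v := by
    funext r
    rcases h : (eCF n).symm r with i | i <;> simp [h, mul_add]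
  map_smul' m u := by
    funext r
    rcases h : (eCF n).symm r with i | i <;>
      simp [h, zsmul_eq_mul, mul_left_comm]

lemma phiCF_inl (n : ℕ) (c₁ c₂ : Fin (2 ^ n) → ℝ) (u : Fin (2 ^ n) → ℝ) (i : Fin (2 ^ n)) :
    phiCF n c₁ c₂ u (eCF n (Sum.inl i)) = c₁ i * u i := by
  simp [phiCF]

lemma phiCF_inr (n : ℕ) (c₁ c₂ : Fin (2 ^ n) → ℝ) (u : Fin (2 ^ n) → ℝ) (i : Fin (2 ^ n)) :
    phiCF n c₁ c₂ u (eCF n (Sum.inr i)) = c₂ i * u i := by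
  simp [phiCF]

lemma colA_inl (n : ℕ) (a : Fin (2 ^ n)) :
    (fun r => ACF (n + 1) r (eCF n (Sum.inl a))) =
      phiCF n (fun _ => 1) (fun _ => 1) (fun i => ACF n i a) := by
  funext r
  obtain ⟨κ, rfl⟩ := (eCF n).surjective r
  rcases κ with i | i <;>
    simp [ACF_succ, phiCF, Matrix.reindex_apply]

lemma colA_inr (n : ℕ) (a : Fin (2 ^ n)) :
    (fun r => ACF (n + 1) r (eCF n (Sum.inr a))) =
      phiCF n (fun i => xiCF (n + 1) (i.val + 1)) (fun i => -xiCF (n + 1) (i.val + 1))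
        (fun i => ACF n i a) := by
  funext r
  obtain ⟨κ, rfl⟩ := (eCF n).surjective r
  rcases κ with i | i <;>
    simp [ACF_succ, phiCF, Matrix.reindex_apply, DCF, Matrix.diagonal_mul, mul_assoc]

lemma colV_eq (n : ℕ) (j : Fin (2 ^ (n + 1))) :
    (fun r => VCF (n + 1) r j) =
      phiCF n (fun i => xiCF (n + 1) (i.val + 1) ^ (j.val % 2))
        (fun i => (-xiCF (n + 1) (i.val + 1)) ^ (j.val % 2))
        (fun i => (xiCF n (i.val + 1) + 2) ^ (j.val / 2)) := by
  funext r
  obtain ⟨κ, rfl⟩ := (eCF n).surjective r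
  rcases κ with i | i
  · rw [phiCF_inl]
    show xiCF (n + 1) ((eCF n (Sum.inl i)).val + 1) ^ j.val = _
    rw [eCF_inl]
    have hsq := xiCF_sq n (i.val + 1) (by omega)
    conv_lhs => rw [← Nat.div_add_mod j.val 2, pow_add, pow_mul, hsq]
    ring
  · rw [phiCF_inr]
    show xiCF (n + 1) ((eCF n (Sum.inr i)).val + 1) ^ j.val = _
    rw [eCF_inr]
    have hneg := xiCF_neg n (i.val + 1) (by omega) (by omega)
    rw [Nat.add_assoc, hneg]
    have hsq : (-xiCF (n + 1) (i.val + 1)) ^ 2 = xiCF n (i.val + 1) + 2 := by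
      rw [neg_sq]; exact xiCF_sq n (i.val + 1) (by omega)
    conv_lhs => rw [← Nat.div_add_mod j.val 2, pow_add, pow_mul, hsq]
    ring

lemma span_ACF_eq_span_VCF (n : ℕ) :
    Submodule.span ℤ (Set.range fun a : Fin (2 ^ n) => fun i => ACF n i a) =
      Submodule.span ℤ (Set.range fun a : Fin (2 ^ n) => fun i => VCF n i a) := by
  induction n with
  | zero =>
    have h : (fun a : Fin (2 ^ 0) => fun i => ACF 0 i a) =
        fun a : Fin (2 ^ 0) => fun i => VCF 0 i a := by
      funext a i
      have hi : i = a := by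
        apply Fin.ext
        have h1 := i.isLt
        have h2 := a.isLt
        norm_num at h1 h2
        omega
      have ha : a.val = 0 := by
        have h2 := a.isLt
        norm_num at h2
        omega
      simp [ACF, VCF, hi, ha, Matrix.one_apply]
    rw [h]
  | succ n ih =>
    set η : Fin (2 ^ n) → ℝ := fun i => xiCF (n + 1) (i.val + 1) with hη
    set x : Fin (2 ^ n) → ℝ := fun i => xiCF n (i.val + 1) with hx
    set φp := phiCF n (fun _ => 1) (fun _ => 1) with hφp
    set φm := phiCF n (fun i => η i) (fun i => -η i) with hφm
    have h2pow : 2 ^ (n + 1) = 2 * 2 ^ n := by rw [pow_succ]; ring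
    -- the A side
    have hA : Submodule.span ℤ (Set.range fun a : Fin (2 ^ (n + 1)) => fun i => ACF (n + 1) i a)
        = (Submodule.span ℤ (Set.range fun a : Fin (2 ^ n) => fun i => ACF n i a)).map φp ⊔
          (Submodule.span ℤ (Set.range fun a : Fin (2 ^ n) => fun i => ACF n i a)).map φm := by
      apply le_antisymm
      · rw [Submodule.span_le]
        rintro _ ⟨c, rfl⟩
        obtain ⟨κ, rfl⟩ := (eCF n).surjective c
        rcases κ with a | a
        · show (fun r => ACF (n + 1) r (eCF n (Sum.inl a))) ∈ _
          rw [colA_inl n a]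
          exact Submodule.mem_sup_left
            (Submodule.mem_map_of_mem (Submodule.subset_span ⟨a, rfl⟩))
        · show (fun r => ACF (n + 1) r (eCF n (Sum.inr a))) ∈ _
          rw [colA_inr n a]
          exact Submodule.mem_sup_right
            (Submodule.mem_map_of_mem (Submodule.subset_span ⟨a, rfl⟩))
      · apply sup_le <;> rw [Submodule.map_span, Submodule.span_le] <;>
          rintro _ ⟨_, ⟨a, rfl⟩, rfl⟩
        · exact Submodule.subset_span ⟨eCF n (Sum.inl a), (colA_inl n a)⟩
        · exact Submodule.subset_span ⟨eCF n (Sum.inr a), (colA_inr n a)⟩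
    -- the V side
    have hV : Submodule.span ℤ (Set.range fun a : Fin (2 ^ (n + 1)) => fun i => VCF (n + 1) i a)
        = (Submodule.span ℤ (Set.range fun a : Fin (2 ^ n) =>
            fun i => (x i + 2) ^ (a : ℕ))).map φp ⊔
          (Submodule.span ℤ (Set.range fun a : Fin (2 ^ n) =>
            fun i => (x i + 2) ^ (a : ℕ))).map φm := by
      apply le_antisymm
      · rw [Submodule.span_le]
        rintro _ ⟨j, rfl⟩
        have hlt : j.val / 2 < 2 ^ n := by have := j.isLt; omega
        have hcol := colV_eq n j
        rcases Nat.mod_two_eq_zero_or_one j.val with h0 | h1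
        · rw [h0] at hcol
          simp only [pow_zero] at hcol
          show (fun r => VCF (n + 1) r j) ∈ _
          rw [hcol]
          refine Submodule.mem_sup_left (Submodule.mem_map_of_mem
            (Submodule.subset_span ⟨⟨j.val / 2, hlt⟩, rfl⟩))
        · rw [h1] at hcol
          simp only [pow_one] at hcol
          show (fun r => VCF (n + 1) r j) ∈ _
          rw [hcol]
          refine Submodule.mem_sup_right (Submodule.mem_map_of_mem
            (Submodule.subset_span ⟨⟨j.val / 2, hlt⟩, rfl⟩))
      · apply sup_le <;> rw [Submodule.map_span, Submodule.span_le] <;>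
          rintro _ ⟨_, ⟨a, rfl⟩, rfl⟩
        · have hjlt : 2 * a.val < 2 ^ (n + 1) := by have := a.isLt; omega
          have hm : (2 * a.val) % 2 = 0 := by omega
          have hd : (2 * a.val) / 2 = a.val := by omega
          have hcol := colV_eq n ⟨2 * a.val, hjlt⟩
          simp only [hm, hd, pow_zero] at hcol
          exact Submodule.subset_span ⟨⟨2 * a.val, hjlt⟩, hcol⟩
        · have hjlt : 2 * a.val + 1 < 2 ^ (n + 1) := by have := a.isLt; omega
          have hm : (2 * a.val + 1) % 2 = 1 := by omega
          have hd : (2 * a.val + 1) / 2 = a.val := by omega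
          have hcol := colV_eq n ⟨2 * a.val + 1, hjlt⟩
          simp only [hm, hd, pow_one] at hcol
          exact Submodule.subset_span ⟨⟨2 * a.val + 1, hjlt⟩, hcol⟩
    have hw : Submodule.span ℤ (Set.range fun a : Fin (2 ^ n) =>
        fun i => (x i + 2) ^ (a : ℕ)) =
        Submodule.span ℤ (Set.range fun a : Fin (2 ^ n) => fun i => ACF n i a) := by
      have h1 := span_pow_shift (2 ^ n) x 2
      simp only [Int.cast_two] at h1
      rw [h1]
      have h2 : (fun a : Fin (2 ^ n) => fun i => x i ^ (a : ℕ)) =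
          fun a : Fin (2 ^ n) => fun i => VCF n i a := rfl
      rw [h2, ← ih]
    rw [hA, hV, hw]

/-- For every non-negative integer `n`, the lattices generated by `A_n` and `V_n` coincide:
`{A_n k : k ∈ ℤ^{2^n}} = {V_n k : k ∈ ℤ^{2^n}}`; hence `A_n` generates (a coordinate
permutation of) the `2^n`-dimensional Chebyshev-Frolov lattice. -/
theorem ACF_lattice_eq_VCF_lattice (n : ℕ) :
    Set.range (fun k : Fin (2 ^ n) → ℤ => (ACF n).mulVec (fun j => (k j : ℝ))) =
      Set.range (fun k : Fin (2 ^ n) → ℤ => (VCF n).mulVec (fun j => (k j : ℝ))) := by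
  rw [range_mulVec_eq, range_mulVec_eq, span_ACF_eq_span_VCF n]
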